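/- Let X₁ ⊆ X and Y₁ ⊆ Y have the extension property in topological spaces X and Y respectively, with X₁ functionally closed in X. Let e : X₁ → Y₁ be a homeomorphism, E = {(x, e(x)) : x ∈ X₁}, and g : E → ℝ a function of the first Baire class. Then there exists a separately continuous function f : X × Y → ℝ with f|_E = g. -/

import Mathlib

open Set Filter Topology

namespace S8

/-- Telescoping sum over `Ioc`. -/
lemma sum_Ioc_telescope (a : ℕ → ℝ) {m N : ℕ} (h : m ≤ N) :
    ∑ n ∈ Finset.Ioc m N, (a n - a (n - 1)) = a N - a m := by
  induction N, h using Nat.le_induction with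
  | base => simp
  | succ N hmN ih =>
      rw [Finset.sum_Ioc_succ_top hmN, ih]
      simp only [Nat.add_sub_cancel]
      ring

lemma sum_Ioc_theta (θ : ℕ → ℝ) {m N : ℕ} (h : m ≤ N) :
    ∑ j ∈ Finset.Ioc m N, (θ j - θ (j + 1)) = θ (m + 1) - θ (N + 1) := by
  have h2 : ∑ j ∈ Finset.Ioc m N, (θ j - θ (j + 1))
      = ∑ j ∈ Finset.Ioc m N, ((fun i => -θ (i + 1)) j - (fun i => -θ (i + 1)) (j - 1)) := by
    refine Finset.sum_congr rfl fun n hn => ?_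
    obtain ⟨hm, _⟩ := Finset.mem_Ioc.1 hn
    obtain ⟨k, rfl⟩ : ∃ k, n = k + 1 := ⟨n - 1, by omega⟩
    show θ (k+1) - θ (k+1+1) = -θ (k+1+1) - -θ (k+1-1+1)
    simp only [Nat.add_sub_cancel]
    ring
  rw [h2, sum_Ioc_telescope _ h]
  show -θ (N+1) - -θ (m+1) = _
  ring

lemma sum_Ioc_half (m N : ℕ) : ∑ n ∈ Finset.Ioc m N, ((1:ℝ)/2) ^ n ≤ (1/2) ^ m := by
  rcases le_or_gt m N with h | h
  · have h2 : ∑ n ∈ Finset.Ioc m N, ((1:ℝ)/2) ^ n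
        = ∑ n ∈ Finset.Ioc m N, ((fun i => -((1:ℝ)/2) ^ i) n - (fun i => -((1:ℝ)/2) ^ i) (n - 1)) := by
      refine Finset.sum_congr rfl fun n hn => ?_
      obtain ⟨hm, _⟩ := Finset.mem_Ioc.1 hn
      obtain ⟨k, rfl⟩ : ∃ k, n = k + 1 := ⟨n - 1, by omega⟩
      show ((1:ℝ)/2) ^ (k+1) = -((1:ℝ)/2) ^ (k+1) - -((1:ℝ)/2) ^ (k+1-1)
      simp only [Nat.add_sub_cancel]
      rw [pow_succ]
      ring
    rw [h2, sum_Ioc_telescope _ h]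
    show -((1:ℝ)/2) ^ N - -((1:ℝ)/2) ^ m ≤ _
    have : (0:ℝ) ≤ (1/2) ^ N := by positivity
    linarith
  · rw [Finset.Ioc_eq_empty (by omega)]
    simp

/-- Abel summation identity. -/
lemma abel_identity (b θ : ℕ → ℝ) (m : ℕ) : ∀ N, ∑ n ∈ Finset.Ioc m N, b n * θ n =
    (∑ j ∈ Finset.Ioc m N, (∑ n ∈ Finset.Ioc m j, b n) * (θ j - θ (j + 1)))
      + (∑ n ∈ Finset.Ioc m N, b n) * θ (N + 1) := by
  intro N
  induction N with
  | zero => rw [Finset.Ioc_eq_empty (by omega)]; simp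
  | succ N ih =>
      rcases le_or_gt m N with h | h
      · rw [Finset.sum_Ioc_succ_top h (fun n => b n * θ n),
          Finset.sum_Ioc_succ_top h (fun j => (∑ n ∈ Finset.Ioc m j, b n) * (θ j - θ (j + 1))),
          Finset.sum_Ioc_succ_top h b, ih]
        ring
      · rw [Finset.Ioc_eq_empty (by omega : ¬ m < N + 1)]
        simp

/-- Abel summation bound: weighted tail sums with antitone weights in `[0,1]`. -/
lemma abel_bound (b θ : ℕ → ℝ) (m N : ℕ) (ε : ℝ) (hε : 0 ≤ ε)
    (hθ0 : ∀ n, 0 ≤ θ n) (hθ1 : ∀ n, θ n ≤ 1) (hθa : ∀ n, θ (n + 1) ≤ θ n)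
    (hS : ∀ j, |∑ n ∈ Finset.Ioc m j, b n| ≤ ε) :
    |∑ n ∈ Finset.Ioc m N, b n * θ n| ≤ ε := by
  rw [abel_identity]
  rcases le_or_gt m N with h | h
  · have h1 : |∑ j ∈ Finset.Ioc m N, (∑ n ∈ Finset.Ioc m j, b n) * (θ j - θ (j + 1))|
        ≤ ∑ j ∈ Finset.Ioc m N, ε * (θ j - θ (j + 1)) := by
      refine (Finset.abs_sum_le_sum_abs _ _).trans (Finset.sum_le_sum fun j _ => ?_)
      rw [abs_mul, abs_of_nonneg (sub_nonneg.2 (hθa j))]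
      exact mul_le_mul_of_nonneg_right (hS j) (sub_nonneg.2 (hθa j))
    have h2 : ∑ j ∈ Finset.Ioc m N, ε * (θ j - θ (j + 1)) = ε * (θ (m+1) - θ (N+1)) := by
      rw [← Finset.mul_sum, sum_Ioc_theta θ h]
    have h3 : |(∑ n ∈ Finset.Ioc m N, b n) * θ (N + 1)| ≤ ε * θ (N + 1) := by
      rw [abs_mul, abs_of_nonneg (hθ0 _)]
      exact mul_le_mul_of_nonneg_right (hS N) (hθ0 _)
    calc |(∑ j ∈ Finset.Ioc m N, (∑ n ∈ Finset.Ioc m j, b n) * (θ j - θ (j + 1)))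
          + (∑ n ∈ Finset.Ioc m N, b n) * θ (N + 1)|
        ≤ ε * (θ (m+1) - θ (N+1)) + ε * θ (N+1) := by
          refine (abs_add_le _ _).trans ?_; rw [← h2]; exact add_le_add h1 h3
      _ = ε * θ (m+1) := by ring
      _ ≤ ε := mul_le_of_le_one_right hε (hθ1 _)
  · rw [Finset.Ioc_eq_empty (by omega)]
    simpa using hε

end S8
set_option linter.unusedSectionVars false
set_option linter.unusedVariables false
noncomputable section

namespace S8

variable {X Y : Type*} [TopologicalSpace X] [TopologicalSpace Y]

/-- Iterated max gauge measuring disagreement of `u k` and `v k` plus `ψ`. -/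
def rho (ψ : X → ℝ) (u : ℕ → X → ℝ) (v : ℕ → Y → ℝ) : ℕ → X × Y → ℝ
  | 0 => fun p => max (ψ p.1) |u 0 p.1 - v 0 p.2|
  | n + 1 => fun p => max (rho ψ u v n p) |u (n+1) p.1 - v (n+1) p.2|

variable (ψ : X → ℝ) (u : ℕ → X → ℝ) (v : ℕ → Y → ℝ)

def theta (n : ℕ) (p : X × Y) : ℝ := max 0 (1 - 2 ^ n * rho ψ u v n p)

def Spart (N : ℕ) (p : X × Y) : ℝ :=
  v 0 p.2 + ∑ n ∈ Finset.Ioc 0 N, (v n p.2 - v (n - 1) p.2) * theta ψ u v n p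

def Flim (p : X × Y) : ℝ := limUnder atTop fun N => Spart ψ u v N p

lemma rho_nonneg : ∀ n p, 0 ≤ rho ψ u v n p
  | 0, p => le_trans (abs_nonneg _) (le_max_right _ _)
  | n + 1, p => le_trans (rho_nonneg n p) (le_max_left _ _)

lemma rho_mono (p : X × Y) : Monotone fun n => rho ψ u v n p :=
  monotone_nat_of_le_succ fun _ => le_max_left _ _

lemma psi_le_rho : ∀ n p, ψ p.1 ≤ rho ψ u v n p
  | 0, p => le_max_left _ _
  | n + 1, p => le_trans (psi_le_rho n p) (le_max_left _ _)

lemma abs_le_rho : ∀ n p, ∀ k ≤ n, |u k p.1 - v k p.2| ≤ rho ψ u v n p := by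
  intro n
  induction n with
  | zero => intro p k hk; interval_cases k; exact le_max_right _ _
  | succ n ih =>
      intro p k hk
      rcases Nat.lt_succ_iff_lt_or_eq.1 (Nat.lt_succ_of_le hk) with h | h
      · exact (ih p k (Nat.lt_succ_iff.1 h)).trans (le_max_left _ _)
      · subst h; exact le_max_right _ _

lemma rho_cont (hψ : Continuous ψ) (hu : ∀ n, Continuous (u n)) (hv : ∀ n, Continuous (v n)) :
    ∀ n, Continuous (rho ψ u v n)
  | 0 => (hψ.comp continuous_fst).max
      (((hu 0).comp continuous_fst).sub ((hv 0).comp continuous_snd)).abs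
  | n + 1 => (rho_cont hψ hu hv n).max
      (((hu (n+1)).comp continuous_fst).sub ((hv (n+1)).comp continuous_snd)).abs

lemma rho_eq_zero {p : X × Y} (hx : ψ p.1 = 0) (huv : ∀ k, u k p.1 = v k p.2) :
    ∀ n, rho ψ u v n p = 0
  | 0 => by show max _ _ = 0; rw [hx, huv 0, sub_self, abs_zero, max_self]
  | n + 1 => by
      show max _ _ = 0
      rw [rho_eq_zero hx huv n, huv (n+1), sub_self, abs_zero, max_self]

lemma theta_nonneg (n : ℕ) (p : X × Y) : 0 ≤ theta ψ u v n p := le_max_left _ _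

lemma theta_le_one (n : ℕ) (p : X × Y) : theta ψ u v n p ≤ 1 := by
  refine max_le zero_le_one ?_
  have h1 : (0:ℝ) ≤ 2 ^ n * rho ψ u v n p :=
    mul_nonneg (by positivity) (rho_nonneg ψ u v n p)
  linarith

lemma theta_anti (p : X × Y) : ∀ n, theta ψ u v (n + 1) p ≤ theta ψ u v n p := by
  intro n
  refine max_le_max le_rfl (sub_le_sub_left ?_ 1)
  refine mul_le_mul (pow_le_pow_right₀ one_le_two (Nat.le_succ n))
    (rho_mono ψ u v p (Nat.le_succ n)) (rho_nonneg ψ u v n p) (by positivity)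

lemma theta_eq_one {n : ℕ} {p : X × Y} (h : rho ψ u v n p = 0) : theta ψ u v n p = 1 := by
  rw [theta, h, mul_zero, sub_zero, max_eq_right zero_le_one]

lemma theta_eq_zero {n : ℕ} {p : X × Y} (h : 1 ≤ 2 ^ n * rho ψ u v n p) :
    theta ψ u v n p = 0 := max_eq_left (by linarith)

lemma rho_le_of_theta_pos {n : ℕ} {p : X × Y} (h : 0 < theta ψ u v n p) :
    rho ψ u v n p ≤ ((1:ℝ)/2) ^ n := by
  have h2 : 0 < 1 - 2 ^ n * rho ψ u v n p := by
    rcases lt_max_iff.1 h with h' | h'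
    · exact absurd h' (lt_irrefl 0)
    · exact h'
  have hp : (0:ℝ) < 2 ^ n := by positivity
  rw [one_div, inv_pow]
  have h3 : rho ψ u v n p = (2 ^ n * rho ψ u v n p) * ((2:ℝ) ^ n)⁻¹ := by field_simp
  rw [h3]
  calc (2 ^ n * rho ψ u v n p) * ((2:ℝ) ^ n)⁻¹ ≤ 1 * ((2:ℝ) ^ n)⁻¹ :=
        mul_le_mul_of_nonneg_right (by linarith) (by positivity)
    _ = ((2:ℝ) ^ n)⁻¹ := one_mul _

lemma theta_cont (hψ : Continuous ψ) (hu : ∀ n, Continuous (u n)) (hv : ∀ n, Continuous (v n))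
    (n : ℕ) : Continuous (theta ψ u v n) :=
  continuous_const.max (continuous_const.sub (continuous_const.mul (rho_cont ψ u v hψ hu hv n)))

lemma Spart_cont (hψ : Continuous ψ) (hu : ∀ n, Continuous (u n)) (hv : ∀ n, Continuous (v n))
    (N : ℕ) : Continuous (Spart ψ u v N) := by
  refine ((hv 0).comp continuous_snd).add (continuous_finset_sum _ fun n _ => ?_)
  exact (((hv n).comp continuous_snd).sub ((hv (n-1)).comp continuous_snd)).mul
    (theta_cont ψ u v hψ hu hv n)

lemma Spart_sub {m N : ℕ} (h : m ≤ N) (p : X × Y) :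
    Spart ψ u v N p - Spart ψ u v m p
      = ∑ n ∈ Finset.Ioc m N, (v n p.2 - v (n - 1) p.2) * theta ψ u v n p := by
  rw [Spart, Spart, ← Finset.sum_Ioc_consecutive _ (Nat.zero_le m) h]
  ring

lemma Spart_eq_v {N : ℕ} {p : X × Y} (h : ∀ n ≤ N, theta ψ u v n p = 1) :
    Spart ψ u v N p = v N p.2 := by
  have h2 : ∑ n ∈ Finset.Ioc 0 N, (v n p.2 - v (n - 1) p.2) * theta ψ u v n p
      = ∑ n ∈ Finset.Ioc 0 N, ((fun k => v k p.2) n - (fun k => v k p.2) (n - 1)) := by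
    refine Finset.sum_congr rfl fun n hn => ?_
    obtain ⟨_, hn2⟩ := Finset.mem_Ioc.1 hn
    rw [h n hn2, mul_one]
  rw [Spart, h2, sum_Ioc_telescope _ (Nat.zero_le N)]
  show v 0 p.2 + (v N p.2 - v 0 p.2) = _
  ring

end S8
namespace S8

variable {X Y : Type*} [TopologicalSpace X] [TopologicalSpace Y]
variable (ψ : X → ℝ) (u : ℕ → X → ℝ) (v : ℕ → Y → ℝ)

lemma all_zero_data (hψ0 : ∀ x, 0 ≤ ψ x) {p : X × Y} (hall : ∀ n, rho ψ u v n p = 0) :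
    ψ p.1 = 0 ∧ (∀ k, u k p.1 = v k p.2) ∧ ∀ N, Spart ψ u v N p = u N p.1 := by
  have hx : ψ p.1 = 0 := le_antisymm (by rw [← hall 0]; exact psi_le_rho ψ u v 0 p) (hψ0 _)
  have huv : ∀ k, u k p.1 = v k p.2 := by
    intro k
    have h1 := abs_le_rho ψ u v k p k le_rfl
    rw [hall k] at h1
    have h2 : u k p.1 - v k p.2 = 0 := abs_nonpos_iff.1 h1
    linarith
  refine ⟨hx, huv, fun N => ?_⟩
  rw [Spart_eq_v ψ u v fun n _ => theta_eq_one ψ u v (hall n)]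
  exact (huv N).symm

lemma Flim_eq_lim (hψ0 : ∀ x, 0 ≤ ψ x) (lim : X → ℝ)
    (hlim : ∀ x, ψ x = 0 → Tendsto (fun n => u n x) atTop (𝓝 (lim x)))
    {p : X × Y} (hall : ∀ n, rho ψ u v n p = 0) :
    Flim ψ u v p = lim p.1 ∧ Tendsto (fun N => Spart ψ u v N p) atTop (𝓝 (lim p.1)) := by
  obtain ⟨hx, _, hS⟩ := all_zero_data ψ u v hψ0 hall
  have ht : Tendsto (fun N => Spart ψ u v N p) atTop (𝓝 (lim p.1)) := by
    have : (fun N => Spart ψ u v N p) = fun N => u N p.1 := funext hS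
    rw [this]
    exact hlim p.1 hx
  exact ⟨ht.limUnder_eq, ht⟩

lemma theta_vanish_pt {p : X × Y} {N₀ : ℕ} (h : 0 < rho ψ u v N₀ p) :
    ∃ M, ∀ n, M ≤ n → theta ψ u v n p = 0 := by
  obtain ⟨K, hK⟩ := pow_unbounded_of_one_lt (1 / rho ψ u v N₀ p) one_lt_two
  refine ⟨max N₀ K, fun n hn => theta_eq_zero ψ u v ?_⟩
  have h1 : rho ψ u v N₀ p ≤ rho ψ u v n p :=
    rho_mono ψ u v p (le_trans (le_max_left _ _) hn)
  have h2 : (2:ℝ) ^ K ≤ 2 ^ n := pow_le_pow_right₀ one_le_two (le_trans (le_max_right _ _) hn)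
  have h3 : (1:ℝ) = (1 / rho ψ u v N₀ p) * rho ψ u v N₀ p := by field_simp
  calc (1:ℝ) = (1 / rho ψ u v N₀ p) * rho ψ u v N₀ p := h3
    _ ≤ 2 ^ K * rho ψ u v N₀ p := mul_le_mul_of_nonneg_right (le_of_lt hK) (le_of_lt h)
    _ ≤ 2 ^ n * rho ψ u v n p :=
        mul_le_mul h2 h1 (le_of_lt h) (by positivity)

lemma theta_vanish (hψ : Continuous ψ) (hu : ∀ n, Continuous (u n))
    (hv : ∀ n, Continuous (v n)) {p₀ : X × Y} {N₀ : ℕ} (h : 0 < rho ψ u v N₀ p₀) :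
    ∃ M U, IsOpen U ∧ p₀ ∈ U ∧ ∀ q ∈ U, ∀ n, M ≤ n → theta ψ u v n q = 0 := by
  set c := rho ψ u v N₀ p₀ with hc
  obtain ⟨K, hK⟩ := pow_unbounded_of_one_lt (2 / c) one_lt_two
  refine ⟨max N₀ K, (rho ψ u v N₀) ⁻¹' Set.Ioi (c/2),
    isOpen_Ioi.preimage (rho_cont ψ u v hψ hu hv N₀), by
      simp only [Set.mem_preimage, Set.mem_Ioi, ← hc]; linarith,
    fun q hq n hn => theta_eq_zero ψ u v ?_⟩
  have h1 : c / 2 < rho ψ u v N₀ q := hq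
  have h2 : rho ψ u v N₀ q ≤ rho ψ u v n q :=
    rho_mono ψ u v q (le_trans (le_max_left _ _) hn)
  have h3 : (2:ℝ) ^ K ≤ 2 ^ n := pow_le_pow_right₀ one_le_two (le_trans (le_max_right _ _) hn)
  have h4 : (1:ℝ) = (2 / c) * (c / 2) := by field_simp
  calc (1:ℝ) = (2 / c) * (c / 2) := h4
    _ ≤ 2 ^ K * (c / 2) := mul_le_mul_of_nonneg_right (le_of_lt hK) (by positivity)
    _ ≤ 2 ^ n * (c / 2) := mul_le_mul_of_nonneg_right h3 (by positivity)
    _ ≤ 2 ^ n * rho ψ u v n q :=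
        mul_le_mul_of_nonneg_left (by linarith) (by positivity)

lemma Flim_eq_Spart {p : X × Y} {M : ℕ} (hz : ∀ n, M ≤ n → theta ψ u v n p = 0) :
    Flim ψ u v p = Spart ψ u v M p ∧
      Tendsto (fun N => Spart ψ u v N p) atTop (𝓝 (Spart ψ u v M p)) := by
  have hconst : ∀ N, M ≤ N → Spart ψ u v N p = Spart ψ u v M p := by
    intro N hN
    have h1 := Spart_sub ψ u v hN p
    have h2 : ∑ n ∈ Finset.Ioc M N, (v n p.2 - v (n-1) p.2) * theta ψ u v n p = 0 :=
      Finset.sum_eq_zero fun n hn => by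
        rw [hz n (le_of_lt (Finset.mem_Ioc.1 hn).1), mul_zero]
    linarith
  have ht : Tendsto (fun N => Spart ψ u v N p) atTop (𝓝 (Spart ψ u v M p)) :=
    Tendsto.congr' (eventually_atTop.2 ⟨M, fun N hN => (hconst N hN).symm⟩) tendsto_const_nhds
  exact ⟨ht.limUnder_eq, ht⟩

lemma tendsto_Spart (hψ0 : ∀ x, 0 ≤ ψ x) (lim : X → ℝ)
    (hlim : ∀ x, ψ x = 0 → Tendsto (fun n => u n x) atTop (𝓝 (lim x))) (p : X × Y) :
    Tendsto (fun N => Spart ψ u v N p) atTop (𝓝 (Flim ψ u v p)) := by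
  by_cases hall : ∀ n, rho ψ u v n p = 0
  · obtain ⟨h1, h2⟩ := Flim_eq_lim ψ u v hψ0 lim hlim hall
    rw [h1]; exact h2
  · push_neg at hall
    obtain ⟨N₀, hN₀⟩ := hall
    have hpos : 0 < rho ψ u v N₀ p := lt_of_le_of_ne (rho_nonneg ψ u v N₀ p) (Ne.symm hN₀)
    obtain ⟨M, hM⟩ := theta_vanish_pt ψ u v hpos
    obtain ⟨h1, h2⟩ := Flim_eq_Spart ψ u v hM
    rw [h1]; exact h2

/-- Convexity bound on partial sums. -/
lemma Spart_bound (c : ℕ → ℝ) (hc : Monotone c) (hvb : ∀ n y, |v n y| ≤ c n)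
    (N : ℕ) (p : X × Y) : |Spart ψ u v N p| ≤ c N := by
  set θ : ℕ → ℝ := fun n => theta ψ u v n p with hθ
  have key : Spart ψ u v N p = v 0 p.2 * (1 - θ 1)
      + (∑ j ∈ Finset.Ioc 0 N, v j p.2 * (θ j - θ (j+1))) + v N p.2 * θ (N+1) := by
    rw [Spart, abel_identity (fun n => v n p.2 - v (n-1) p.2) θ 0 N]
    have e1 : ∀ j ∈ Finset.Ioc 0 N,
        (∑ n ∈ Finset.Ioc 0 j, (v n p.2 - v (n-1) p.2)) * (θ j - θ (j+1))
          = v j p.2 * (θ j - θ (j+1)) - v 0 p.2 * (θ j - θ (j+1)) := by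
      intro j hj
      rw [sum_Ioc_telescope (fun k => v k p.2) (Nat.zero_le j)]
      ring
    rw [Finset.sum_congr rfl e1, Finset.sum_sub_distrib, ← Finset.mul_sum,
      sum_Ioc_theta θ (Nat.zero_le N), sum_Ioc_telescope (fun k => v k p.2) (Nat.zero_le N)]
    ring
  have hΔ : ∀ j, 0 ≤ θ j - θ (j+1) := fun j => sub_nonneg.2 (theta_anti ψ u v p j)
  have hθ0 : ∀ j, 0 ≤ θ j := fun j => theta_nonneg ψ u v j p
  have hθ1 : ∀ j, θ j ≤ 1 := fun j => theta_le_one ψ u v j p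
  have hcN : ∀ j, j ≤ N → c j ≤ c N := fun j hj => hc hj
  have h1 : |v 0 p.2 * (1 - θ 1)| ≤ c N * (1 - θ 1) := by
    rw [abs_mul, abs_of_nonneg (by linarith [hθ1 1] : (0:ℝ) ≤ 1 - θ 1)]
    exact mul_le_mul_of_nonneg_right ((hvb 0 p.2).trans (hcN 0 (Nat.zero_le N)))
      (by linarith [hθ1 1])
  have h2 : |∑ j ∈ Finset.Ioc 0 N, v j p.2 * (θ j - θ (j+1))|
      ≤ c N * (θ 1 - θ (N+1)) := by
    refine (Finset.abs_sum_le_sum_abs _ _).trans ?_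
    have : ∀ j ∈ Finset.Ioc 0 N, |v j p.2 * (θ j - θ (j+1))| ≤ c N * (θ j - θ (j+1)) := by
      intro j hj
      rw [abs_mul, abs_of_nonneg (hΔ j)]
      exact mul_le_mul_of_nonneg_right ((hvb j p.2).trans (hcN j (Finset.mem_Ioc.1 hj).2)) (hΔ j)
    refine (Finset.sum_le_sum this).trans ?_
    rw [← Finset.mul_sum, sum_Ioc_theta θ (Nat.zero_le N)]
  have h3 : |v N p.2 * θ (N+1)| ≤ c N * θ (N+1) := by
    rw [abs_mul, abs_of_nonneg (hθ0 _)]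
    exact mul_le_mul_of_nonneg_right (hvb N p.2) (hθ0 _)
  calc |Spart ψ u v N p| ≤ |v 0 p.2 * (1 - θ 1)|
        + |∑ j ∈ Finset.Ioc 0 N, v j p.2 * (θ j - θ (j+1))| + |v N p.2 * θ (N+1)| := by
        rw [key]; exact (abs_add_le _ _).trans (add_le_add_left (abs_add_le _ _) _)
    _ ≤ c N * (1 - θ 1) + c N * (θ 1 - θ (N+1)) + c N * θ (N+1) := by
        exact add_le_add (add_le_add h1 h2) h3
    _ = c N := by ring

lemma Flim_contAt (hψ : Continuous ψ) (hu : ∀ n, Continuous (u n))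
    (hv : ∀ n, Continuous (v n)) {p₀ : X × Y} {N₀ : ℕ} (h : 0 < rho ψ u v N₀ p₀) :
    ContinuousAt (Flim ψ u v) p₀ := by
  obtain ⟨M, U, hUo, hUp, hUz⟩ := theta_vanish ψ u v hψ hu hv h
  refine ((Spart_cont ψ u v hψ hu hv M).continuousAt).congr ?_
  exact Filter.eventually_of_mem (hUo.mem_nhds hUp) fun q hq => ((Flim_eq_Spart ψ u v (hUz q hq)).1).symm

end S8
namespace S8

variable {X Y : Type*} [TopologicalSpace X] [TopologicalSpace Y]
variable (ψ : X → ℝ) (u : ℕ → X → ℝ) (v : ℕ → Y → ℝ)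

lemma half_pow_small (δ : ℝ) (hδ : 0 < δ) : ∃ m₂ : ℕ, ((1:ℝ)/2) ^ m₂ < δ := by
  have h := tendsto_pow_atTop_nhds_zero_of_lt_one (by norm_num : (0:ℝ) ≤ 1/2) (by norm_num)
  exact (h.eventually (gt_mem_nhds hδ)).exists

/-- Continuity in the second variable at a point where the gauge vanishes identically. -/
lemma contAt_snd (hψc : Continuous ψ) (hψ0 : ∀ x, 0 ≤ ψ x)
    (hu : ∀ n, Continuous (u n)) (hv : ∀ n, Continuous (v n))
    (lim : X → ℝ) (hlim : ∀ x, ψ x = 0 → Tendsto (fun n => u n x) atTop (𝓝 (lim x)))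
    {x : X} {y₀ : Y} (hall : ∀ n, rho ψ u v n (x, y₀) = 0) :
    ContinuousAt (fun y => Flim ψ u v (x, y)) y₀ := by
  obtain ⟨hx, huv, hSv⟩ := all_zero_data ψ u v hψ0 hall
  simp only at hx huv hSv
  have hl : Tendsto (fun n => u n x) atTop (𝓝 (lim x)) := hlim x hx
  have hFy₀ : Flim ψ u v (x, y₀) = lim x := (Flim_eq_lim ψ u v hψ0 lim hlim hall).1
  rw [ContinuousAt, hFy₀, Metric.tendsto_nhds]
  intro ε hε
  obtain ⟨m₁, hm₁⟩ := Metric.tendsto_atTop.1 hl (ε/16) (by positivity)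
  obtain ⟨m₂, hm₂⟩ := half_pow_small (ε/16) (by positivity)
  set m := max m₁ m₂ with hm
  -- uniform tail bound, valid for every y
  have hU : ∀ y, |Flim ψ u v (x, y) - Spart ψ u v m (x, y)| ≤ ε/8 + 2*(1/2)^m := by
    intro y
    have hN : ∀ N, m ≤ N →
        |Spart ψ u v N (x,y) - Spart ψ u v m (x,y)| ≤ ε/8 + 2*(1/2)^m := by
      intro N hN
      rw [Spart_sub ψ u v hN]
      have hsplit : ∀ n ∈ Finset.Ioc m N,
          (v n (x,y).2 - v (n-1) (x,y).2) * theta ψ u v n (x,y)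
            = (u n x - u (n-1) x) * theta ψ u v n (x,y)
              + ((v n y - u n x) - (v (n-1) y - u (n-1) x)) * theta ψ u v n (x,y) :=
        fun n _ => by show (v n y - v (n-1) y) * _ = _; ring
      rw [Finset.sum_congr rfl hsplit, Finset.sum_add_distrib]
      refine (abs_add_le _ _).trans ?_
      have hb1 : |∑ n ∈ Finset.Ioc m N, (u n x - u (n-1) x) * theta ψ u v n (x,y)| ≤ ε/8 := by
        refine abel_bound _ _ m N (ε/8) (by positivity)
          (fun n => theta_nonneg ψ u v n (x,y)) (fun n => theta_le_one ψ u v n (x,y))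
          (fun n => theta_anti ψ u v (x,y) n) ?_
        intro j
        rcases le_or_gt m j with hj | hj
        · rw [sum_Ioc_telescope (fun k => u k x) hj]
          have d1 : dist (u j x) (lim x) < ε/16 := hm₁ j (le_trans (le_max_left _ _) hj)
          have d2 : dist (u m x) (lim x) < ε/16 := hm₁ m (le_max_left _ _)
          rw [Real.dist_eq] at d1 d2
          have t : u j x - u m x = (u j x - lim x) + (lim x - u m x) := by ring
          rw [t]
          have := abs_add_le (u j x - lim x) (lim x - u m x)
          rw [abs_sub_comm (lim x) (u m x)] at this
          linarith
        · rw [Finset.Ioc_eq_empty (by omega)]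
          simpa using (by positivity : (0:ℝ) ≤ ε/8)
      have hb2 : |∑ n ∈ Finset.Ioc m N,
          ((v n y - u n x) - (v (n-1) y - u (n-1) x)) * theta ψ u v n (x,y)|
            ≤ 2*(1/2)^m := by
        refine (Finset.abs_sum_le_sum_abs _ _).trans ?_
        have hterm : ∀ n ∈ Finset.Ioc m N,
            |((v n y - u n x) - (v (n-1) y - u (n-1) x)) * theta ψ u v n (x,y)|
              ≤ 2*(1/2)^n := by
          intro n hn
          by_cases hθ : theta ψ u v n (x,y) = 0
          · rw [hθ, mul_zero, abs_zero]; positivity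
          · have hθpos : 0 < theta ψ u v n (x,y) :=
              lt_of_le_of_ne (theta_nonneg ψ u v n (x,y)) (Ne.symm hθ)
            have hρ := rho_le_of_theta_pos ψ u v hθpos
            have a1 : |u n x - v n y| ≤ rho ψ u v n (x,y) := abs_le_rho ψ u v n (x,y) n le_rfl
            have a2 : |u (n-1) x - v (n-1) y| ≤ rho ψ u v n (x,y) :=
              abs_le_rho ψ u v n (x,y) (n-1) (Nat.sub_le n 1)
            rw [abs_mul]
            have hle : |(v n y - u n x) - (v (n-1) y - u (n-1) x)|
                ≤ 2 * rho ψ u v n (x,y) := by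
              have t1 : |v n y - u n x| ≤ rho ψ u v n (x,y) := by
                rw [abs_sub_comm]; exact a1
              have t2 : |v (n-1) y - u (n-1) x| ≤ rho ψ u v n (x,y) := by
                rw [abs_sub_comm]; exact a2
              calc |(v n y - u n x) - (v (n-1) y - u (n-1) x)|
                  ≤ |v n y - u n x| + |v (n-1) y - u (n-1) x| := abs_sub _ _
                _ ≤ 2 * rho ψ u v n (x,y) := by linarith
            have habs : |theta ψ u v n (x,y)| ≤ 1 := by
              rw [abs_of_nonneg (theta_nonneg ψ u v n (x,y))]
              exact theta_le_one ψ u v n (x,y)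
            calc |(v n y - u n x) - (v (n-1) y - u (n-1) x)| * |theta ψ u v n (x,y)|
                ≤ (2 * rho ψ u v n (x,y)) * 1 := by
                  refine mul_le_mul hle habs (abs_nonneg _) (by linarith [rho_nonneg ψ u v n (x,y)])
              _ = 2 * rho ψ u v n (x,y) := by ring
              _ ≤ 2 * (1/2)^n := by linarith
        refine (Finset.sum_le_sum hterm).trans ?_
        have : ∑ n ∈ Finset.Ioc m N, 2*((1:ℝ)/2)^n = 2 * ∑ n ∈ Finset.Ioc m N, ((1:ℝ)/2)^n := by
          rw [Finset.mul_sum]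
        rw [this]
        have := sum_Ioc_half m N
        linarith
      linarith
    have ht := tendsto_Spart ψ u v hψ0 lim hlim (x, y)
    have ht2 : Tendsto (fun N => |Spart ψ u v N (x,y) - Spart ψ u v m (x,y)|) atTop
        (𝓝 |Flim ψ u v (x,y) - Spart ψ u v m (x,y)|) := (ht.sub tendsto_const_nhds).abs
    exact le_of_tendsto ht2 (eventually_atTop.2 ⟨m, hN⟩)
  have hSc : ContinuousAt (fun y => Spart ψ u v m (x, y)) y₀ :=
    ((Spart_cont ψ u v hψc hu hv m).comp (Continuous.prodMk_right x)).continuousAt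
  have hSy₀ : Spart ψ u v m (x, y₀) = u m x := hSv m
  have hev : ∀ᶠ y in 𝓝 y₀,
      |Spart ψ u v m (x,y) - Spart ψ u v m (x,y₀)| < ε/4 := by
    have := Metric.tendsto_nhds.1 hSc (ε/4) (by positivity)
    refine this.mono fun y hy => ?_
    rw [Real.dist_eq] at hy; exact hy
  refine hev.mono fun y hy => ?_
  rw [Real.dist_eq]
  have e1 := hU y
  have e2 : ((1:ℝ)/2)^m ≤ (1/2)^m₂ :=
    pow_le_pow_of_le_one (by norm_num) (by norm_num) (le_max_right _ _)
  have d2 : |u m x - lim x| < ε/16 := by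
    have := hm₁ m (le_max_left _ _); rw [Real.dist_eq] at this; exact this
  have t1 : Flim ψ u v (x,y) - lim x
      = (Flim ψ u v (x,y) - Spart ψ u v m (x,y))
        + (Spart ψ u v m (x,y) - Spart ψ u v m (x,y₀))
        + (Spart ψ u v m (x,y₀) - lim x) := by ring
  rw [t1]
  have habs := abs_add_le ((Flim ψ u v (x,y) - Spart ψ u v m (x,y))
    + (Spart ψ u v m (x,y) - Spart ψ u v m (x,y₀))) (Spart ψ u v m (x,y₀) - lim x)
  have habs2 := abs_add_le (Flim ψ u v (x,y) - Spart ψ u v m (x,y))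
    (Spart ψ u v m (x,y) - Spart ψ u v m (x,y₀))
  have d3 : |Spart ψ u v m (x,y₀) - lim x| < ε/16 := by rw [hSy₀]; exact d2
  linarith

/-- Continuity in the first variable at a point where the gauge vanishes identically. -/
lemma contAt_fst (hψc : Continuous ψ) (hψ0 : ∀ x, 0 ≤ ψ x)
    (hu : ∀ n, Continuous (u n)) (hv : ∀ n, Continuous (v n))
    (lim : X → ℝ) (hlim : ∀ x, ψ x = 0 → Tendsto (fun n => u n x) atTop (𝓝 (lim x)))
    {x₀ : X} {y : Y} (hall : ∀ n, rho ψ u v n (x₀, y) = 0) :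
    ContinuousAt (fun x => Flim ψ u v (x, y)) x₀ := by
  obtain ⟨hx, huv, hSv⟩ := all_zero_data ψ u v hψ0 hall
  simp only at hx huv hSv
  have hl : Tendsto (fun n => u n x₀) atTop (𝓝 (lim x₀)) := hlim x₀ hx
  have hFx₀ : Flim ψ u v (x₀, y) = lim x₀ := (Flim_eq_lim ψ u v hψ0 lim hlim hall).1
  rw [ContinuousAt, hFx₀, Metric.tendsto_nhds]
  intro ε hε
  obtain ⟨m, hm₁⟩ := Metric.tendsto_atTop.1 hl (ε/16) (by positivity)
  -- uniform tail bound, valid for every x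
  have hU : ∀ x, |Flim ψ u v (x, y) - Spart ψ u v m (x, y)| ≤ ε/8 := by
    intro x
    have hN : ∀ N, m ≤ N →
        |Spart ψ u v N (x,y) - Spart ψ u v m (x,y)| ≤ ε/8 := by
      intro N hN
      rw [Spart_sub ψ u v hN]
      refine abel_bound _ _ m N (ε/8) (by positivity)
        (fun n => theta_nonneg ψ u v n (x,y)) (fun n => theta_le_one ψ u v n (x,y))
        (fun n => theta_anti ψ u v (x,y) n) ?_
      intro j
      rcases le_or_gt m j with hj | hj
      · have : ∑ n ∈ Finset.Ioc m j, (v n (x,y).2 - v (n-1) (x,y).2)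
            = v j y - v m y := by
          have := sum_Ioc_telescope (fun k => v k y) hj
          simpa using this
        rw [this]
        have hvu : ∀ k, v k y = u k x₀ := fun k => (huv k).symm
        rw [hvu j, hvu m]
        have d1 : dist (u j x₀) (lim x₀) < ε/16 := hm₁ j hj
        have d2 : dist (u m x₀) (lim x₀) < ε/16 := hm₁ m le_rfl
        rw [Real.dist_eq] at d1 d2
        have t : u j x₀ - u m x₀ = (u j x₀ - lim x₀) + (lim x₀ - u m x₀) := by ring
        rw [t]
        have := abs_add_le (u j x₀ - lim x₀) (lim x₀ - u m x₀)
        rw [abs_sub_comm (lim x₀) (u m x₀)] at this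
        linarith
      · rw [Finset.Ioc_eq_empty (by omega)]
        simpa using (by positivity : (0:ℝ) ≤ ε/8)
    have ht := tendsto_Spart ψ u v hψ0 lim hlim (x, y)
    have ht2 : Tendsto (fun N => |Spart ψ u v N (x,y) - Spart ψ u v m (x,y)|) atTop
        (𝓝 |Flim ψ u v (x,y) - Spart ψ u v m (x,y)|) := (ht.sub tendsto_const_nhds).abs
    exact le_of_tendsto ht2 (eventually_atTop.2 ⟨m, hN⟩)
  have hSc : ContinuousAt (fun x => Spart ψ u v m (x, y)) x₀ :=
    ((Spart_cont ψ u v hψc hu hv m).comp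
      (continuous_id.prodMk continuous_const)).continuousAt
  have hSx₀ : Spart ψ u v m (x₀, y) = u m x₀ := hSv m
  have hev : ∀ᶠ x in 𝓝 x₀,
      |Spart ψ u v m (x,y) - Spart ψ u v m (x₀,y)| < ε/4 := by
    have := Metric.tendsto_nhds.1 hSc (ε/4) (by positivity)
    refine this.mono fun x hx2 => ?_
    rw [Real.dist_eq] at hx2; exact hx2
  refine hev.mono fun x hx2 => ?_
  rw [Real.dist_eq]
  have e1 := hU x
  have d2 : |u m x₀ - lim x₀| < ε/16 := by
    have := hm₁ m le_rfl; rw [Real.dist_eq] at this; exact this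
  have t1 : Flim ψ u v (x,y) - lim x₀
      = (Flim ψ u v (x,y) - Spart ψ u v m (x,y))
        + (Spart ψ u v m (x,y) - Spart ψ u v m (x₀,y))
        + (Spart ψ u v m (x₀,y) - lim x₀) := by ring
  rw [t1]
  have habs := abs_add_le ((Flim ψ u v (x,y) - Spart ψ u v m (x,y))
    + (Spart ψ u v m (x,y) - Spart ψ u v m (x₀,y))) (Spart ψ u v m (x₀,y) - lim x₀)
  have habs2 := abs_add_le (Flim ψ u v (x,y) - Spart ψ u v m (x,y))
    (Spart ψ u v m (x,y) - Spart ψ u v m (x₀,y))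
  have d3 : |Spart ψ u v m (x₀,y) - lim x₀| < ε/16 := by rw [hSx₀]; exact d2
  linarith

end S8
namespace S8

variable {X Y : Type*} [TopologicalSpace X] [TopologicalSpace Y]
variable (ψ : X → ℝ) (u : ℕ → X → ℝ) (v : ℕ → Y → ℝ)

lemma Flim_cont_snd (hψc : Continuous ψ) (hψ0 : ∀ x, 0 ≤ ψ x)
    (hu : ∀ n, Continuous (u n)) (hv : ∀ n, Continuous (v n))
    (lim : X → ℝ) (hlim : ∀ x, ψ x = 0 → Tendsto (fun n => u n x) atTop (𝓝 (lim x)))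
    (x : X) : Continuous fun y => Flim ψ u v (x, y) := by
  rw [continuous_iff_continuousAt]
  intro y₀
  by_cases hall : ∀ n, rho ψ u v n (x, y₀) = 0
  · exact contAt_snd ψ u v hψc hψ0 hu hv lim hlim hall
  · push_neg at hall
    obtain ⟨N₀, hN₀⟩ := hall
    have hpos : 0 < rho ψ u v N₀ (x, y₀) :=
      lt_of_le_of_ne (rho_nonneg ψ u v N₀ (x, y₀)) (Ne.symm hN₀)
    exact (Flim_contAt ψ u v hψc hu hv hpos).comp (Continuous.prodMk_right x).continuousAt

lemma Flim_cont_fst (hψc : Continuous ψ) (hψ0 : ∀ x, 0 ≤ ψ x)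
    (hu : ∀ n, Continuous (u n)) (hv : ∀ n, Continuous (v n))
    (lim : X → ℝ) (hlim : ∀ x, ψ x = 0 → Tendsto (fun n => u n x) atTop (𝓝 (lim x)))
    (y : Y) : Continuous fun x => Flim ψ u v (x, y) := by
  rw [continuous_iff_continuousAt]
  intro x₀
  by_cases hall : ∀ n, rho ψ u v n (x₀, y) = 0
  · exact contAt_fst ψ u v hψc hψ0 hu hv lim hlim hall
  · push_neg at hall
    obtain ⟨N₀, hN₀⟩ := hall
    have hpos : 0 < rho ψ u v N₀ (x₀, y) :=
      lt_of_le_of_ne (rho_nonneg ψ u v N₀ (x₀, y)) (Ne.symm hN₀)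
    have h2 : ContinuousAt (Flim ψ u v ∘ fun x : X => (x, y)) x₀ :=
      ContinuousAt.comp (Flim_contAt ψ u v hψc hu hv hpos)
        ((continuous_id.prodMk continuous_const).continuousAt)
    exact h2

lemma Flim_lt_one (hψ0 : ∀ x, 0 ≤ ψ x)
    (c : ℕ → ℝ) (hcmono : Monotone c) (hvb : ∀ n y, |v n y| ≤ c n) (hclt : ∀ n, c n < 1)
    (lim : X → ℝ) (hlim : ∀ x, ψ x = 0 → Tendsto (fun n => u n x) atTop (𝓝 (lim x)))
    (hlt : ∀ x, ψ x = 0 → |lim x| < 1) (p : X × Y) : |Flim ψ u v p| < 1 := by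
  by_cases hall : ∀ n, rho ψ u v n p = 0
  · rw [(Flim_eq_lim ψ u v hψ0 lim hlim hall).1]
    exact hlt p.1 (all_zero_data ψ u v hψ0 hall).1
  · push_neg at hall
    obtain ⟨N₀, hN₀⟩ := hall
    have hpos : 0 < rho ψ u v N₀ p :=
      lt_of_le_of_ne (rho_nonneg ψ u v N₀ p) (Ne.symm hN₀)
    obtain ⟨M, hM⟩ := theta_vanish_pt ψ u v hpos
    rw [(Flim_eq_Spart ψ u v hM).1]
    exact lt_of_le_of_lt (Spart_bound ψ u v c hcmono hvb M p) (hclt M)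

/-- Extension of bounded continuous functions from sets with the extension property. -/
lemma extend_bdd {Z : Type*} [TopologicalSpace Z] (Z₁ : Set Z)
    (hZ : ∀ u : Z₁ → ℝ, Continuous u → (∀ a, u a ∈ Set.Icc (0:ℝ) 1) →
      ∃ v : Z → ℝ, Continuous v ∧ (∀ z, v z ∈ Set.Icc (0:ℝ) 1) ∧ ∀ a : Z₁, v a = u a)
    (w : Z₁ → ℝ) (hw : Continuous w) (c : ℝ) (hc : 0 < c) (hwb : ∀ a, |w a| ≤ c) :
    ∃ v : Z → ℝ, Continuous v ∧ (∀ z, |v z| ≤ c) ∧ ∀ a : Z₁, v a = w a := by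
  obtain ⟨V, hVc, hVb, hVe⟩ := hZ (fun a => (w a + c)/(2*c))
    ((hw.add continuous_const).div_const _)
    (fun a => by
      obtain ⟨h1, h2⟩ := abs_le.1 (hwb a)
      constructor
      · exact div_nonneg (by linarith) (by linarith)
      · rw [div_le_one (by linarith)]; linarith)
  refine ⟨fun z => 2*c*V z - c, by fun_prop, fun z => ?_, fun a => ?_⟩
  · obtain ⟨h1, h2⟩ := hVb z
    rw [abs_le]
    constructor
    · show -c ≤ 2*c*V z - c; nlinarith
    · show 2*c*V z - c ≤ c; nlinarith
  · show 2*c*V ↑a - c = w a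
    rw [hVe a]
    field_simp
    ring

/-- Squashing homeomorphism of `ℝ` onto `(-1,1)`. -/
def sq (t : ℝ) : ℝ := t / (1 + |t|)

def unsq (s : ℝ) : ℝ := s / (1 - |s|)

lemma sq_cont : Continuous sq :=
  continuous_id.div (continuous_const.add continuous_abs) (fun t => by positivity)

lemma sq_lt_one (t : ℝ) : |sq t| < 1 := by
  have h : (0:ℝ) < 1 + |t| := by positivity
  rw [sq, abs_div, abs_of_pos h, div_lt_one h]
  linarith [abs_nonneg t]

lemma unsq_sq (t : ℝ) : unsq (sq t) = t := by
  have h : (0:ℝ) < 1 + |t| := by positivity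
  rw [unsq, sq, abs_div, abs_of_pos h,
    show 1 - |t| / (1 + |t|) = 1/(1+|t|) by field_simp; ring]
  field_simp

lemma unsq_contAt {s : ℝ} (h : |s| < 1) : ContinuousAt unsq s := by
  refine ContinuousAt.div continuousAt_id
    ((continuous_const.sub continuous_abs).continuousAt) ?_
  have : (0:ℝ) < 1 - |s| := by linarith
  exact ne_of_gt this

end S8
open S8 in
theorem stmt8 {X Y : Type*} [TopologicalSpace X] [TopologicalSpace Y]
    (X₁ : Set X) (Y₁ : Set Y)
    (hX₁ : ∀ u : X₁ → ℝ, Continuous u → (∀ a, u a ∈ Icc (0:ℝ) 1) →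
      ∃ v : X → ℝ, Continuous v ∧ (∀ x, v x ∈ Icc (0:ℝ) 1) ∧ ∀ a : X₁, v a = u a)
    (hY₁ : ∀ u : Y₁ → ℝ, Continuous u → (∀ b, u b ∈ Icc (0:ℝ) 1) →
      ∃ v : Y → ℝ, Continuous v ∧ (∀ y, v y ∈ Icc (0:ℝ) 1) ∧ ∀ b : Y₁, v b = u b)
    (e : X₁ ≃ₜ Y₁)
    (E : Set (X × Y)) (hE : E = {p : X × Y | ∃ x : X₁, p = ((x : X), (e x : Y))})
    (g : E → ℝ)
    (hg : ∃ gs : ℕ → E → ℝ, (∀ n, Continuous (gs n)) ∧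
      ∀ p : E, Tendsto (fun n => gs n p) atTop (𝓝 (g p)))
    (hX₁fc : ∃ φ : X → ℝ, Continuous φ ∧ X₁ = φ ⁻¹' {0}) :
    ∃ f : X × Y → ℝ,
      (∀ x : X, Continuous fun y => f (x, y)) ∧
      (∀ y : Y, Continuous fun x => f (x, y)) ∧
      (∀ p : E, f p = g p) := by
  classical
  obtain ⟨gs, hgsc, hgst⟩ := hg
  obtain ⟨φ, hφc, hφ0⟩ := hX₁fc
  -- the control function ψ, vanishing exactly on X₁
  set ψ : X → ℝ := fun x => min |φ x| 1 with hψdef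
  have hψc : Continuous ψ := (hφc.abs).min continuous_const
  have hψ0 : ∀ x, 0 ≤ ψ x := fun x => le_min (abs_nonneg _) zero_le_one
  have hψmem : ∀ x, ψ x = 0 ↔ x ∈ X₁ := by
    intro x
    constructor
    · intro h
      rcases le_total |φ x| 1 with hle | hle
      · rw [hψdef] at h; simp only at h
        rw [min_eq_left hle] at h
        have : φ x = 0 := abs_eq_zero.1 h
        rw [hφ0]; exact this
      · rw [hψdef] at h; simp only at h
        rw [min_eq_right hle] at h
        norm_num at h
    · intro hx
      have h0 : φ x = 0 := by rw [hφ0] at hx; exact hx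
      rw [hψdef]; simp [h0]
  -- bounds
  set c : ℕ → ℝ := fun n => 1 - 1/((n:ℝ)+2) with hcdef
  have hcpos : ∀ n, 0 < c n ∧ c n < 1 := by
    intro n
    have h1 : (0:ℝ) < (n:ℝ) + 2 := by positivity
    have h2 : (2:ℝ) ≤ (n:ℝ) + 2 := by
      have : (0:ℝ) ≤ (n:ℝ) := Nat.cast_nonneg n
      linarith
    have h3 : 1/((n:ℝ)+2) ≤ 1/2 := by
      apply one_div_le_one_div_of_le <;> linarith
    have h4 : (0:ℝ) < 1/((n:ℝ)+2) := by positivity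
    constructor <;> [skip; skip] <;> simp only [hcdef] <;> linarith
  have hcmono : Monotone c := by
    intro a b hab
    have hcast : ((a:ℝ)+2) ≤ ((b:ℝ)+2) := by
      have : (a:ℝ) ≤ (b:ℝ) := Nat.cast_le.2 hab
      linarith
    have := one_div_le_one_div_of_le (by positivity : (0:ℝ) < (a:ℝ)+2) hcast
    simp only [hcdef]
    linarith
  -- squashed and truncated approximating sequence on E
  set hfun : ℕ → E → ℝ := fun n p => max (-(c n)) (min (c n) (S8.sq (gs n p))) with hhdef
  have hhc : ∀ n, Continuous (hfun n) := fun n =>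
    continuous_const.max (continuous_const.min (sq_cont.comp (hgsc n)))
  have hhb : ∀ n (p : E), |hfun n p| ≤ c n := by
    intro n p
    have hcn := (hcpos n).1
    rw [abs_le]
    constructor
    · exact le_max_left _ _
    · exact max_le (by linarith) (min_le_left _ _)
  have hht : ∀ p : E, Tendsto (fun n => hfun n p) atTop (𝓝 (S8.sq (g p))) := by
    intro p
    have h1 : Tendsto (fun n => S8.sq (gs n p)) atTop (𝓝 (S8.sq (g p))) :=
      (sq_cont.continuousAt).tendsto.comp (hgst p)
    have h2 : |S8.sq (g p)| < 1 := sq_lt_one _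
    have h3 : ∀ᶠ n in atTop, |S8.sq (gs n p)| ≤ c n := by
      have hev1 : ∀ᶠ n in atTop, |S8.sq (gs n p)| < (1 + |S8.sq (g p)|)/2 := by
        have habs : Tendsto (fun n => |S8.sq (gs n p)|) atTop (𝓝 (|S8.sq (g p)|)) := h1.abs
        exact habs.eventually (eventually_lt_nhds (by linarith))
      have hev2 : ∀ᶠ n in atTop, (1 + |S8.sq (g p)|)/2 ≤ c n := by
        obtain ⟨N, hN⟩ := exists_nat_gt (2/(1 - |S8.sq (g p)|))
        refine eventually_atTop.2 ⟨N, fun n hn => ?_⟩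
        have hpos1 : (0:ℝ) < 1 - |S8.sq (g p)| := by linarith
        have hn2 : (2:ℝ)/(1 - |S8.sq (g p)|) < (n:ℝ) + 2 := by
          have : (N:ℝ) ≤ (n:ℝ) := Nat.cast_le.2 hn
          have : (0:ℝ) ≤ (n:ℝ) - (N:ℝ) := by linarith
          linarith
        have hfrac : 1/((n:ℝ)+2) < (1 - |S8.sq (g p)|)/2 := by
          rw [div_lt_div_iff₀ (by positivity) (by norm_num)]
          rw [div_lt_iff₀ hpos1] at hn2
          linarith
        simp only [hcdef]
        linarith
      refine (hev1.and hev2).mono fun n hn => le_trans (le_of_lt hn.1) hn.2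
    have h4 : ∀ᶠ n in atTop, hfun n p = S8.sq (gs n p) := by
      refine h3.mono fun n hb => ?_
      obtain ⟨l, r⟩ := abs_le.1 hb
      show max (-(c n)) (min (c n) (S8.sq (gs n p))) = S8.sq (gs n p)
      rw [min_eq_right r, max_eq_right l]
    exact h1.congr' (h4.mono fun n hn => hn.symm)
  -- maps into E
  have memE : ∀ a : X₁, ((a : X), (e a : Y)) ∈ E := fun a => by rw [hE]; exact ⟨a, rfl⟩
  set toE : X₁ → E := fun a => ⟨((a : X), (e a : Y)), memE a⟩ with htoEdef
  have toE_cont : Continuous toE :=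
    Continuous.subtype_mk (continuous_subtype_val.prodMk
      (continuous_subtype_val.comp e.continuous)) _
  have memE' : ∀ b : Y₁, ((e.symm b : X), (b : Y)) ∈ E := fun b => by
    rw [hE]
    exact ⟨e.symm b, by rw [e.apply_symm_apply]⟩
  set toE' : Y₁ → E := fun b => ⟨((e.symm b : X), (b : Y)), memE' b⟩ with htoE'def
  have toE'_cont : Continuous toE' :=
    Continuous.subtype_mk ((continuous_subtype_val.comp e.symm.continuous).prodMk
      continuous_subtype_val) _
  -- extended families u and v
  have hext_u : ∀ n, ∃ w : X → ℝ, Continuous w ∧ (∀ x, |w x| ≤ c n) ∧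
      ∀ a : X₁, w a = hfun n (toE a) := fun n =>
    extend_bdd X₁ hX₁ (fun a => hfun n (toE a)) ((hhc n).comp toE_cont)
      (c n) (hcpos n).1 (fun a => hhb n _)
  choose u huc hub hue using hext_u
  have hext_v : ∀ n, ∃ w : Y → ℝ, Continuous w ∧ (∀ y, |w y| ≤ c n) ∧
      ∀ b : Y₁, w b = hfun n (toE' b) := fun n =>
    extend_bdd Y₁ hY₁ (fun b => hfun n (toE' b)) ((hhc n).comp toE'_cont)
      (c n) (hcpos n).1 (fun b => hhb n _)
  choose v hvc hvb hve using hext_v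
  -- agreement along the graph
  have hagree : ∀ n (a : X₁), u n a = v n (e a) := by
    intro n a
    rw [hue n a, hve n (e a)]
    congr 1
    apply Subtype.ext
    show ((a:X), (e a:Y)) = ((e.symm (e a) : X), ((e a) : Y))
    rw [e.symm_apply_apply]
  -- the limit function
  set limf : X → ℝ := fun x => if hx : x ∈ X₁ then S8.sq (g (toE ⟨x, hx⟩)) else 0 with hlimfdef
  have hlim : ∀ x, ψ x = 0 → Tendsto (fun n => u n x) atTop (𝓝 (limf x)) := by
    intro x hx
    have hx1 : x ∈ X₁ := (hψmem x).1 hx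
    have h1 : (fun n => u n x) = fun n => hfun n (toE ⟨x, hx1⟩) :=
      funext fun n => hue n ⟨x, hx1⟩
    rw [h1]
    have h2 : limf x = S8.sq (g (toE ⟨x, hx1⟩)) := by rw [hlimfdef]; simp only; rw [dif_pos hx1]
    rw [h2]
    exact hht (toE ⟨x, hx1⟩)
  have hlt : ∀ x, ψ x = 0 → |limf x| < 1 := by
    intro x hx
    have hx1 : x ∈ X₁ := (hψmem x).1 hx
    have h2 : limf x = S8.sq (g (toE ⟨x, hx1⟩)) := by rw [hlimfdef]; simp only; rw [dif_pos hx1]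
    rw [h2]
    exact sq_lt_one _
  -- the separately continuous function
  refine ⟨fun p => unsq (Flim ψ u v p), ?_, ?_, ?_⟩
  · intro x
    have hFc := Flim_cont_snd ψ u v hψc hψ0 huc hvc limf hlim x
    rw [continuous_iff_continuousAt]
    intro y₀
    have hb := Flim_lt_one ψ u v hψ0 c hcmono hvb (fun n => (hcpos n).2) limf hlim hlt (x, y₀)
    have h5 : ContinuousAt (unsq ∘ fun y => Flim ψ u v (x, y)) y₀ :=
      ContinuousAt.comp (unsq_contAt hb) hFc.continuousAt
    exact h5
  · intro y
    have hFc := Flim_cont_fst ψ u v hψc hψ0 huc hvc limf hlim y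
    rw [continuous_iff_continuousAt]
    intro x₀
    have hb := Flim_lt_one ψ u v hψ0 c hcmono hvb (fun n => (hcpos n).2) limf hlim hlt (x₀, y)
    have h5 : ContinuousAt (unsq ∘ fun x => Flim ψ u v (x, y)) x₀ :=
      ContinuousAt.comp (unsq_contAt hb) hFc.continuousAt
    exact h5
  · intro p
    obtain ⟨a, ha⟩ : ∃ a : X₁, (p : X × Y) = ((a:X), (e a:Y)) := by
      have h2 : (p : X × Y) ∈ {q : X × Y | ∃ x : X₁, q = ((x:X), (e x:Y))} := by
        rw [← hE]; exact p.2
      exact h2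
    have hx0 : ψ (a:X) = 0 := (hψmem _).2 a.2
    have hall : ∀ n, rho ψ u v n ((a:X), (e a:Y)) = 0 :=
      rho_eq_zero ψ u v hx0 (fun k => hagree k a)
    have hFl : Flim ψ u v ((a:X), (e a:Y)) = limf (a:X) :=
      (Flim_eq_lim ψ u v hψ0 limf hlim hall).1
    show unsq (Flim ψ u v (p : X × Y)) = g p
    rw [ha, hFl]
    have ha2 : (a:X) ∈ X₁ := a.2
    have h2 : limf (a:X) = S8.sq (g (toE ⟨(a:X), ha2⟩)) := by
      rw [hlimfdef]; simp only; rw [dif_pos ha2]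
    rw [h2, unsq_sq]
    congr 1
    apply Subtype.ext
    show ((a:X), (e ⟨(a:X), ha2⟩ : Y)) = (p : X × Y)
    have hsub : (⟨(a:X), ha2⟩ : X₁) = a := Subtype.ext rfl
    rw [hsub, ha]
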